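/- Define UNIFORM(n) recursively for positive integers n: let b = ⌊log₂ n⌋; with probability 2^b/n return the sum Σ_{i=0}^{b-1} Y_i · 2^i where the Y_i are independent Bernoulli(1/2); otherwise (with probability (n - 2^b)/n) return UNIFORM(n - 2^b) + 2^b, using fresh independent randomness. Then for all n > 0 and all 0 ≤ i < n, Pr(UNIFORM(n) = i) = 1/n. -/

import Mathlib

/-- The probability mass function of the distribution produced by the recursive
algorithm `UNIFORM(n)`: with probability `2^b / n` (where `b = ⌊log₂ n⌋`) it
returns a uniformly random integer in `{0, …, 2^b - 1}` (obtained from `b`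
independent fair coin flips, each value having mass `1 / 2^b`), and with
probability `(n - 2^b) / n` it returns `UNIFORM(n - 2^b) + 2^b`. -/
noncomputable def uniformAlgPMF : ℕ → ℕ → ℝ
  | 0, _ => 0
  | (n + 1), i =>
    let b := Nat.log 2 (n + 1)
    ((2 ^ b : ℝ) / (n + 1)) * (if i < 2 ^ b then (1 : ℝ) / 2 ^ b else 0) +
      (((n + 1 : ℕ) - 2 ^ b : ℕ) : ℝ) / (n + 1) *
        (if 2 ^ b ≤ i then uniformAlgPMF ((n + 1) - 2 ^ b) (i - 2 ^ b) else 0)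
  termination_by n => n
  decreasing_by
    have h1 : 0 < 2 ^ Nat.log 2 (n + 1) := by positivity
    omega

/-- Correctness of the UNIFORM algorithm: for every `n > 0` and every `0 ≤ i < n`,
`Pr(UNIFORM(n) = i) = 1/n`. -/
theorem uniformAlg_correct : ∀ n : ℕ, 0 < n → ∀ i < n, uniformAlgPMF n i = 1 / n := by
  intro n
  induction n using Nat.strong_induction_on with
  | _ n ih =>
    intro hn i hi
    obtain ⟨m, rfl⟩ : ∃ m, n = m + 1 := ⟨n - 1, by omega⟩
    rw [uniformAlgPMF]
    set b := Nat.log 2 (m + 1) with hb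
    have hble : 2 ^ b ≤ m + 1 := Nat.pow_log_le_self 2 (by omega)
    have hbpos : (0:ℕ) < 2 ^ b := Nat.pow_pos (by norm_num)
    have hnR : ((m:ℝ) + 1) ≠ 0 := by positivity
    by_cases hcase : i < 2 ^ b
    · rw [if_pos hcase, if_neg (by omega)]
      have h2b : (2:ℝ) ^ b ≠ 0 := by positivity
      push_cast
      field_simp
      ring
    · rw [if_neg hcase, if_pos (by omega)]
      have hlt : m + 1 - 2 ^ b < m + 1 := by omega
      have hpos : 0 < m + 1 - 2 ^ b := by omega
      rw [ih _ hlt hpos _ (by omega)]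
      have hne : ((m + 1 - 2 ^ b : ℕ) : ℝ) ≠ 0 := by
        exact_mod_cast hpos.ne'
      rw [Nat.cast_sub hble] at hne
      push_cast [Nat.cast_sub hble]
      push_cast at hne
      field_simp
      ring
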